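/- arXiv:1401.2645 — 3 statements merged into one kernel-verified Lean document; each statement's English description precedes it below -/
import Mathlib

section
/- Let a, b > 0 with ab ≠ 1. Then for all n ≥ 0, the multi poly-Euler numbers with parameters satisfy E_n^{(k_1,...,k_r)}(a,b) = E_n^{(k_1,...,k_r)}(ln a / (ln a + ln b)) * (ln a + ln b)^n. -/
open Real Filter

/-- The multi-polylogarithm `Li_{(k_1,…,k_r)}(z) = ∑_{0 < m_1 < … < m_r} z^{m_r} / ∏ m_i^{k_i}`. -/
noncomputable def multiPolylog (r : ℕ) (k : Fin r → ℤ) (z : ℝ) : ℝ :=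
  ∑' m : {f : Fin r → ℕ // StrictMono f ∧ ∀ i, 0 < f i},
    z ^ (Finset.univ.sup m.1) / ∏ i, ((m.1 i : ℝ) ^ (k i))

/-- From an eventual `HasSum` near `0` we get a power series representation. -/
lemma aux_hasFPowerSeriesAt {c : ℕ → ℝ} {g : ℝ → ℝ}
    (hc : ∀ᶠ t in nhds (0 : ℝ), HasSum (fun n : ℕ => c n * t ^ n) (g t)) :
    HasFPowerSeriesAt g (FormalMultilinearSeries.ofScalars ℝ c) 0 := by
  obtain ⟨ε, hε, h⟩ := Metric.eventually_nhds_iff.mp hc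
  set r : NNReal := ⟨ε / 2, le_of_lt (half_pos hε)⟩ with hr
  have hrε : (r : ℝ) < ε := by
    simp only [hr, NNReal.coe_mk]
    show ε / 2 < ε
    linarith
  refine ⟨(r : ENNReal), ?_, ?_, ?_⟩
  · apply FormalMultilinearSeries.le_radius_of_summable_norm
    have hs : HasSum (fun n : ℕ => c n * (r : ℝ) ^ n) (g r) := by
      apply h
      rw [Real.dist_eq, sub_zero, abs_of_nonneg r.coe_nonneg]
      exact hrε
    have hsum : Summable fun n : ℕ => |c n * (r : ℝ) ^ n| :=
      summable_abs_iff.mpr hs.summable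
    refine hsum.congr fun n => ?_
    rw [FormalMultilinearSeries.ofScalars_norm, abs_mul,
      abs_of_nonneg (pow_nonneg r.coe_nonneg n), Real.norm_eq_abs]
  · have hr0 : (0 : ℝ) < (r : ℝ) := half_pos hε
    exact_mod_cast ENNReal.coe_pos.mpr (by exact_mod_cast hr0)
  · intro y hy
    rw [Metric.emetric_ball_nnreal, Metric.mem_ball, Real.dist_eq, sub_zero] at hy
    simp_rw [FormalMultilinearSeries.ofScalars_apply_eq, smul_eq_mul, zero_add]
    apply h
    rw [Real.dist_eq, sub_zero]
    exact lt_trans hy hrε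

/-- Uniqueness of power series coefficients. -/
lemma aux_coeff_eq {c d : ℕ → ℝ} {g : ℝ → ℝ}
    (hc : ∀ᶠ t in nhds (0 : ℝ), HasSum (fun n : ℕ => c n * t ^ n) (g t))
    (hd : ∀ᶠ t in nhds (0 : ℝ), HasSum (fun n : ℕ => d n * t ^ n) (g t)) : c = d :=
  FormalMultilinearSeries.ofScalars_series_injective ℝ ℝ
    ((aux_hasFPowerSeriesAt hc).eq_formalMultilinearSeries (aux_hasFPowerSeriesAt hd))

/-- `E_n^{(k_1,…,k_r)}(a,b) = E_n^{(k_1,…,k_r)}(ln a/(ln a + ln b)) * (ln a + ln b)^n`. -/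
theorem multiPolyEuler_param_eq (r : ℕ) (hr : 0 < r) (k : Fin r → ℤ)
    (a b : ℝ) (ha : 0 < a) (hb : 0 < b) (hab : a * b ≠ 1)
    (E : ℕ → ℝ → ℝ) (F : ℕ → ℝ)
    (hE : ∀ x : ℝ, ∀ᶠ t in nhds (0 : ℝ),
      HasSum (fun n : ℕ => E n x * t ^ n / n.factorial)
        (2 * multiPolylog r k (1 - Real.exp (-t)) / (1 + Real.exp t) ^ r *
          Real.exp (r * x * t)))
    (hF : ∀ᶠ t in nhds (0 : ℝ),
      HasSum (fun n : ℕ => F n * t ^ n / n.factorial)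
        (2 * multiPolylog r k (1 - (a * b) ^ (-t)) / (a ^ (-t) + b ^ t) ^ r)) :
    ∀ n : ℕ, F n =
      E n (Real.log a / (Real.log a + Real.log b)) * (Real.log a + Real.log b) ^ n := by
  set L : ℝ := Real.log a + Real.log b with hLdef
  have hLlog : L = Real.log (a * b) := (Real.log_mul ha.ne' hb.ne').symm
  have hL : L ≠ 0 := by
    rw [hLlog]
    intro h0
    rcases (Real.log_eq_zero).mp h0 with h | h | h
    · exact absurd h (mul_pos ha hb).ne'
    · exact hab h
    · nlinarith [mul_pos ha hb]
  set x : ℝ := Real.log a / L with hxdef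
  have hxL : x * L = Real.log a := div_mul_cancel₀ _ hL
  -- the target function
  set g : ℝ → ℝ := fun t =>
    2 * multiPolylog r k (1 - (a * b) ^ (-t)) / (a ^ (-t) + b ^ t) ^ r with hg
  -- key pointwise identity
  have key : ∀ t : ℝ,
      2 * multiPolylog r k (1 - Real.exp (-(L * t))) / (1 + Real.exp (L * t)) ^ r *
        Real.exp (r * x * (L * t)) = g t := by
    intro t
    have h1 : (a * b : ℝ) ^ (-t) = Real.exp (-(L * t)) := by
      rw [Real.rpow_def_of_pos (mul_pos ha hb), ← hLlog]
      ring_nf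
    have h2 : a ^ (-t) = (Real.exp (t * Real.log a))⁻¹ := by
      rw [Real.rpow_def_of_pos ha, ← Real.exp_neg]
      congr 1
      ring
    have h3 : b ^ t = Real.exp (t * Real.log b) := by
      rw [Real.rpow_def_of_pos hb]
      ring
    have hden : a ^ (-t) + b ^ t = (Real.exp (t * Real.log a))⁻¹ * (1 + Real.exp (L * t)) := by
      rw [h2, h3, mul_add, mul_one, ← Real.exp_neg, ← Real.exp_add]
      congr 1
      rw [hLdef]; ring
    have hexp : Real.exp (r * x * (L * t)) = (Real.exp (t * Real.log a)) ^ r := by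
      rw [← Real.exp_nat_mul]
      congr 1
      rw [← hxL]; ring
    simp only [hg]
    rw [h1, hden, hexp, mul_pow, inv_pow]
    rw [div_mul_eq_div_div, div_inv_eq_mul]
    ring
  -- pull back hE along t ↦ L * t
  have htend : Tendsto (fun t : ℝ => L * t) (nhds 0) (nhds 0) := by
    have : Continuous fun t : ℝ => L * t := by continuity
    simpa using this.tendsto 0
  have hE' : ∀ᶠ t in nhds (0 : ℝ),
      HasSum (fun n : ℕ => (E n x * L ^ n / n.factorial) * t ^ n) (g t) := by
    filter_upwards [htend.eventually (hE x)] with t ht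
    have ht' := ht
    rw [key t] at ht'
    refine ht'.congr_fun fun n => ?_
    rw [mul_pow]
    ring
  have hF' : ∀ᶠ t in nhds (0 : ℝ),
      HasSum (fun n : ℕ => (F n / n.factorial) * t ^ n) (g t) := by
    filter_upwards [hF] with t ht
    refine ht.congr_fun fun n => ?_
    ring
  have heq := aux_coeff_eq hF' hE'
  intro n
  have h := congrFun heq n
  have hn : (n.factorial : ℝ) ≠ 0 := Nat.cast_ne_zero.mpr n.factorial_ne_zero
  field_simp at h
  rw [h]
end

section
/- Let a, b > 0 with ab ≠ 1. Then for all n ≥ 0, E_n^{(k_1,...,k_r)}(a,b) = sum over i from 0 to n of r^{n-i} * (ln a + ln b)^i * (ln a)^{n-i} * binomial(n,i) * E_i^{(k_1,...,k_r)}, where E_i^{(k_1,...,k_r)} = E_i^{(k_1,...,k_r)}(0) are the multi poly-Euler numbers. -/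
open Real Filter

/-- Uniqueness of exponential power series coefficients. -/
lemma expCoeff_unique (F G : ℕ → ℝ) (f : ℝ → ℝ)
    (hF : ∀ᶠ t in nhds (0 : ℝ), HasSum (fun n : ℕ => F n * t ^ n / n.factorial) (f t))
    (hG : ∀ᶠ t in nhds (0 : ℝ), HasSum (fun n : ℕ => G n * t ^ n / n.factorial) (f t)) :
    ∀ n, F n = G n := by
  let p : FormalMultilinearSeries ℝ ℝ ℝ := fun n =>
    ContinuousMultilinearMap.mkPiRing ℝ (Fin n) (F n / n.factorial)
  let q : FormalMultilinearSeries ℝ ℝ ℝ := fun n =>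
    ContinuousMultilinearMap.mkPiRing ℝ (Fin n) (G n / n.factorial)
  have hpc : ∀ n, p.coeff n = F n / n.factorial := by
    intro n
    simp [p, FormalMultilinearSeries.coeff]
  have hqc : ∀ n, q.coeff n = G n / n.factorial := by
    intro n
    simp [q, FormalMultilinearSeries.coeff]
  have hp : HasFPowerSeriesAt f p 0 := by
    rw [hasFPowerSeriesAt_iff]
    filter_upwards [hF] with t ht
    have : (fun n => t ^ n • p.coeff n) = fun n : ℕ => F n * t ^ n / n.factorial := by
      funext n
      rw [hpc n, smul_eq_mul]
      ring
    rw [this]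
    simpa using ht
  have hq : HasFPowerSeriesAt f q 0 := by
    rw [hasFPowerSeriesAt_iff]
    filter_upwards [hG] with t ht
    have : (fun n => t ^ n • q.coeff n) = fun n : ℕ => G n * t ^ n / n.factorial := by
      funext n
      rw [hqc n, smul_eq_mul]
      ring
    rw [this]
    simpa using ht
  have hpq : p = q := hp.eq_formalMultilinearSeries hq
  intro n
  have h2 : p.coeff n = q.coeff n := by rw [hpq]
  rw [hpc n, hqc n, div_eq_div_iff (by positivity) (by positivity)] at h2
  have hfac : (n.factorial : ℝ) ≠ 0 := by positivity
  exact mul_right_cancel₀ hfac h2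

/-- `E_n^{(k_1,…,k_r)}(a,b) = ∑_{i=0}^n r^{n-i} (ln a + ln b)^i (ln a)^{n-i} C(n,i) E_i^{(k_1,…,k_r)}`. -/
theorem multiPolyEuler_param_sum (r : ℕ) (hr : 0 < r) (k : Fin r → ℤ)
    (a b : ℝ) (ha : 0 < a) (hb : 0 < b) (hab : a * b ≠ 1)
    (E : ℕ → ℝ → ℝ) (F : ℕ → ℝ)
    (hE : ∀ x : ℝ, ∀ᶠ t in nhds (0 : ℝ),
      HasSum (fun n : ℕ => E n x * t ^ n / n.factorial)
        (2 * multiPolylog r k (1 - Real.exp (-t)) / (1 + Real.exp t) ^ r *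
          Real.exp (r * x * t)))
    (hF : ∀ᶠ t in nhds (0 : ℝ),
      HasSum (fun n : ℕ => F n * t ^ n / n.factorial)
        (2 * multiPolylog r k (1 - (a * b) ^ (-t)) / (a ^ (-t) + b ^ t) ^ r)) :
    ∀ n : ℕ, F n =
      ∑ i ∈ Finset.range (n + 1),
        (r : ℝ) ^ (n - i) * (Real.log a + Real.log b) ^ i * (Real.log a) ^ (n - i) *
          (n.choose i : ℝ) * E i 0 := by
  set c : ℝ := Real.log a + Real.log b with hc_def
  have hclog : c = Real.log (a * b) := (Real.log_mul ha.ne' hb.ne').symm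
  clear_value c
  -- the coefficients of the claimed expansion
  set D : ℕ → ℝ := fun n => ∑ i ∈ Finset.range (n + 1),
      (r : ℝ) ^ (n - i) * c ^ i * (Real.log a) ^ (n - i) * (n.choose i : ℝ) * E i 0 with hD_def
  -- the E-series at x = 0, scaled by c
  have hE0 : ∀ᶠ t in nhds (0 : ℝ),
      HasSum (fun n : ℕ => E n 0 * t ^ n / n.factorial)
        (2 * multiPolylog r k (1 - Real.exp (-t)) / (1 + Real.exp t) ^ r) := by
    filter_upwards [hE 0] with t ht
    simpa using ht
  have hcont : Tendsto (fun t : ℝ => c * t) (nhds 0) (nhds 0) := by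
    have : Continuous fun t : ℝ => c * t := continuous_const.mul continuous_id
    simpa using this.tendsto 0
  have hscaled : ∀ᶠ t in nhds (0 : ℝ),
      HasSum (fun n : ℕ => E n 0 * (c * t) ^ n / n.factorial)
        (2 * multiPolylog r k (1 - Real.exp (-(c * t))) / (1 + Real.exp (c * t)) ^ r) :=
    hcont.eventually hE0
  -- key: the D-series sums to the parametrized generating function
  have key : ∀ᶠ t in nhds (0 : ℝ),
      HasSum (fun n : ℕ => D n * t ^ n / n.factorial)
        (2 * multiPolylog r k (1 - (a * b) ^ (-t)) / (a ^ (-t) + b ^ t) ^ r) := by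
    filter_upwards [hscaled] with t ht
    have hf' : Summable fun n : ℕ => ‖E n 0 * (c * t) ^ n / n.factorial‖ := by
      simp only [Real.norm_eq_abs]
      exact summable_abs_iff.mpr ht.summable
    have hg' : Summable fun n : ℕ => ‖((r : ℝ) * Real.log a * t) ^ n / n.factorial‖ := by
      have := Real.summable_pow_div_factorial |(r : ℝ) * Real.log a * t|
      refine this.congr fun n => ?_
      rw [Real.norm_eq_abs, abs_div, abs_pow, Nat.abs_cast]
    have hexp : HasSum (fun n : ℕ => ((r : ℝ) * Real.log a * t) ^ n / n.factorial)
        (Real.exp ((r : ℝ) * Real.log a * t)) := by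
      rw [Real.exp_eq_exp_ℝ]
      exact NormedSpace.expSeries_div_hasSum_exp _
    have product := hasSum_sum_range_mul_of_summable_norm hf' hg'
    rw [ht.tsum_eq, hexp.tsum_eq] at product
    -- identify the Cauchy product coefficients with `D n * t ^ n / n!`
    have funeq : (fun n : ℕ => ∑ i ∈ Finset.range (n + 1),
        (E i 0 * (c * t) ^ i / i.factorial) *
          (((r : ℝ) * Real.log a * t) ^ (n - i) / (n - i).factorial))
        = fun n : ℕ => D n * t ^ n / n.factorial := by
      funext n
      rw [hD_def]
      rw [Finset.sum_mul, Finset.sum_div]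
      refine Finset.sum_congr rfl fun i hi => ?_
      have hi' : i ≤ n := Nat.lt_succ_iff.mp (Finset.mem_range.mp hi)
      obtain ⟨j, rfl⟩ : ∃ j, n = i + j := ⟨n - i, (Nat.add_sub_cancel' hi').symm⟩
      have hsub : i + j - i = j := by omega
      have hchoose : ((i + j).choose i : ℝ) * i.factorial * j.factorial
          = (i + j).factorial := by
        have h := Nat.choose_mul_factorial_mul_factorial (Nat.le_add_right i j)
        rw [Nat.add_sub_cancel_left] at h
        exact_mod_cast h
      have hi0 : (i.factorial : ℝ) ≠ 0 := by positivity
      have hj0 : (j.factorial : ℝ) ≠ 0 := by positivity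
      have hn0 : ((i + j).factorial : ℝ) ≠ 0 := by positivity
      rw [hsub]
      field_simp
      rw [← hchoose]
      ring
    rw [funeq] at product
    -- identify the sum with the parametrized generating function
    have harg : (a * b) ^ (-t) = Real.exp (-(c * t)) := by
      rw [Real.rpow_def_of_pos (mul_pos ha hb), hclog]
      ring_nf
    have hden : a ^ (-t) + b ^ t = Real.exp (-(Real.log a * t)) * (1 + Real.exp (c * t)) := by
      rw [Real.rpow_def_of_pos ha, Real.rpow_def_of_pos hb, mul_add, mul_one,
        ← Real.exp_add]
      congr 2
      · ring
      · rw [hc_def]; ring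
    have heq : 2 * multiPolylog r k (1 - Real.exp (-(c * t))) / (1 + Real.exp (c * t)) ^ r *
        Real.exp ((r : ℝ) * Real.log a * t)
        = 2 * multiPolylog r k (1 - (a * b) ^ (-t)) / (a ^ (-t) + b ^ t) ^ r := by
      rw [harg, hden, mul_pow, ← Real.exp_nat_mul]
      have hinv : Real.exp ((r : ℝ) * -(Real.log a * t))
          = (Real.exp ((r : ℝ) * Real.log a * t))⁻¹ := by
        rw [← Real.exp_neg]
        ring_nf
      rw [hinv, div_eq_mul_inv, div_eq_mul_inv, mul_inv, inv_inv]
      ring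
    rw [heq] at product
    exact product
  -- conclude by uniqueness of exponential series coefficients
  intro n
  exact expCoeff_unique F D _ hF key n
end

section
/- The generating function identity: Li_{(k_1,...,k_r)}(1-e^{-t}) * e^{rxt} = sum_{n>=0} c_n t^n/n!, where c_n = sum over 0 < m_1 < ... < m_r, sum over j from 0 to m_r of (-1)^j * (rx - j)^n * binomial(m_r, j) / (m_1^{k_1}...m_r^{k_r}). -/
open Real Filter

/-- `Sseq M a = ∑_{j=0}^M (-1)^j C(M,j) j^a`. -/
noncomputable def Sseq (M a : ℕ) : ℝ :=
  ∑ j ∈ Finset.range (M + 1), (-1 : ℝ) ^ j * (M.choose j : ℝ) * (j : ℝ) ^ a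

/-- `Wseq M a = (-1)^M Sseq M a` is the number of surjections `[a] ↠ [M]`. -/
noncomputable def Wseq (M a : ℕ) : ℝ := (-1 : ℝ) ^ M * Sseq M a

lemma Wseq_zero (a : ℕ) : Wseq 0 a = (0 : ℝ) ^ a := by
  simp [Wseq, Sseq]

lemma Sseq_rec (M n : ℕ) :
    Sseq (M + 1) n = Sseq M n - ∑ a ∈ Finset.range (n + 1), (n.choose a : ℝ) * Sseq M a := by
  have h1 : Sseq (M + 1) n
      = (∑ i ∈ Finset.range (M + 1),
          (-1 : ℝ) ^ (i+1) * ((M+1).choose (i+1) : ℝ) * ((i:ℝ)+1) ^ n) + (0:ℝ)^n := by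
    rw [Sseq, Finset.sum_range_succ']
    push_cast
    ring_nf
    simp [Nat.choose_zero_right]
  have h2 : ∀ i : ℕ, (-1 : ℝ) ^ (i+1) * ((M+1).choose (i+1) : ℝ) * ((i:ℝ)+1) ^ n
      = (-1:ℝ)^(i+1) * (M.choose i : ℝ) * ((i:ℝ)+1)^n
        + (-1:ℝ)^(i+1) * (M.choose (i+1) : ℝ) * ((i:ℝ)+1)^n := by
    intro i
    rw [Nat.choose_succ_succ]
    push_cast
    ring
  -- the second partial sum telescopes to `Sseq M n - 0^n`
  have h3 : (∑ i ∈ Finset.range (M + 1),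
      (-1:ℝ)^(i+1) * (M.choose (i+1) : ℝ) * ((i:ℝ)+1)^n) = Sseq M n - (0:ℝ)^n := by
    have := Finset.sum_range_succ' (fun j => (-1:ℝ)^j * (M.choose j : ℝ) * (j:ℝ)^n) (M+1)
    rw [Finset.sum_range_succ (fun j => (-1:ℝ)^j * (M.choose j : ℝ) * (j:ℝ)^n) (M+1)] at this
    simp only [Nat.choose_succ_self, Nat.cast_zero, Nat.cast_ofNat, mul_zero, zero_mul,
      add_zero, Nat.choose_zero_right, Nat.cast_one, pow_zero, one_mul, mul_one] at this
    -- `this : Sseq M n + 0 = ∑ i ∈ range (M+1), f (i+1) + 0^n` roughly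
    have e1 : Sseq M n = ∑ i ∈ Finset.range (M + 1),
        (-1:ℝ)^(i+1) * (M.choose (i+1) : ℝ) * ((i:ℝ)+1)^n + (0:ℝ)^n := by
      rw [Sseq]
      convert this using 2 with i hi
      push_cast
      ring
    linarith [e1]
  -- expand `(i+1)^n` binomially in the first sum
  have h4 : (∑ i ∈ Finset.range (M + 1),
      (-1:ℝ)^(i+1) * (M.choose i : ℝ) * ((i:ℝ)+1)^n)
      = - ∑ a ∈ Finset.range (n + 1), (n.choose a : ℝ) * Sseq M a := by
    have hexp : ∀ i : ℕ, ((i:ℝ)+1)^n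
        = ∑ a ∈ Finset.range (n+1), (i:ℝ)^a * (n.choose a : ℝ) := by
      intro i
      rw [add_pow]
      exact Finset.sum_congr rfl fun a _ => by rw [one_pow]; ring
    calc (∑ i ∈ Finset.range (M + 1), (-1:ℝ)^(i+1) * (M.choose i : ℝ) * ((i:ℝ)+1)^n)
        = ∑ i ∈ Finset.range (M + 1), ∑ a ∈ Finset.range (n+1),
            (n.choose a : ℝ) * (-((-1:ℝ)^i * (M.choose i : ℝ) * (i:ℝ)^a)) := by
          refine Finset.sum_congr rfl fun i _ => ?_
          rw [hexp i, Finset.mul_sum]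
          refine Finset.sum_congr rfl fun a _ => ?_
          ring
      _ = ∑ a ∈ Finset.range (n+1), ∑ i ∈ Finset.range (M + 1),
            (n.choose a : ℝ) * (-((-1:ℝ)^i * (M.choose i : ℝ) * (i:ℝ)^a)) := Finset.sum_comm
      _ = - ∑ a ∈ Finset.range (n + 1), (n.choose a : ℝ) * Sseq M a := by
          rw [← Finset.sum_neg_distrib]
          refine Finset.sum_congr rfl fun a _ => ?_
          rw [Sseq, Finset.mul_sum, ← Finset.sum_neg_distrib]
          refine Finset.sum_congr rfl fun i _ => ?_
          ring
  calc Sseq (M+1) n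
      = (∑ i ∈ Finset.range (M + 1),
          ((-1:ℝ)^(i+1) * (M.choose i : ℝ) * ((i:ℝ)+1)^n
            + (-1:ℝ)^(i+1) * (M.choose (i+1) : ℝ) * ((i:ℝ)+1)^n)) + (0:ℝ)^n := by
        rw [h1]; congr 1; exact Finset.sum_congr rfl fun i _ => h2 i
    _ = Sseq M n - ∑ a ∈ Finset.range (n + 1), (n.choose a : ℝ) * Sseq M a := by
        rw [Finset.sum_add_distrib, h3, h4]; ring

lemma Sseq_eq (M a : ℕ) : Sseq M a = (-1 : ℝ) ^ M * Wseq M a := by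
  rw [Wseq, ← mul_assoc, ← pow_add, Even.neg_one_pow ⟨M, rfl⟩, one_mul]

lemma Wseq_rec (M n : ℕ) :
    Wseq (M + 1) n = ∑ a ∈ Finset.range n, (n.choose a : ℝ) * Wseq M a := by
  have h : ∑ a ∈ Finset.range (n+1), (n.choose a : ℝ) * Wseq M a
      = (∑ a ∈ Finset.range n, (n.choose a : ℝ) * Wseq M a) + Wseq M n := by
    rw [Finset.sum_range_succ, Nat.choose_self]; norm_num
  have hpull : ∑ a ∈ Finset.range (n+1), (n.choose a : ℝ) * ((-1:ℝ)^M * Wseq M a)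
      = (-1:ℝ)^M * ∑ a ∈ Finset.range (n+1), (n.choose a : ℝ) * Wseq M a := by
    rw [Finset.mul_sum]; exact Finset.sum_congr rfl fun a _ => by ring
  have hsign : (-1:ℝ)^(M+1) * (-1:ℝ)^M = -1 := by
    rw [← pow_add, Odd.neg_one_pow ⟨M, by ring⟩]
  have h2 : Wseq (M+1) n
      = (∑ a ∈ Finset.range (n+1), (n.choose a : ℝ) * Wseq M a) - Wseq M n := by
    rw [Wseq, Sseq_rec]
    simp only [Sseq_eq]
    rw [hpull]
    calc (-1:ℝ)^(M+1) * ((-1:ℝ)^M * Wseq M n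
            - (-1:ℝ)^M * ∑ a ∈ Finset.range (n+1), (n.choose a : ℝ) * Wseq M a)
        = ((-1:ℝ)^(M+1) * (-1:ℝ)^M) * (Wseq M n
            - ∑ a ∈ Finset.range (n+1), (n.choose a : ℝ) * Wseq M a) := by ring
      _ = _ := by rw [hsign]; ring
  rw [h2, h]; ring
lemma Wseq_nonneg (M a : ℕ) : 0 ≤ Wseq M a := by
  induction M generalizing a with
  | zero => rw [Wseq_zero]; positivity
  | succ M ih =>
      rw [Wseq_rec]
      exact Finset.sum_nonneg fun i _ => mul_nonneg (by positivity) (ih i)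

lemma coeff_helper {n a : ℕ} (h : a ≤ n) (s z : ℝ) :
    (s ^ a / a.factorial) * (z ^ (n - a) / (n - a).factorial)
      = (n.choose a : ℝ) * (s ^ a * z ^ (n - a)) / n.factorial := by
  rw [Nat.cast_choose ℝ h]
  have h1 : (a.factorial : ℝ) ≠ 0 := by positivity
  have h2 : ((n - a).factorial : ℝ) ≠ 0 := by positivity
  have h3 : (n.factorial : ℝ) ≠ 0 := by positivity
  field_simp

lemma exp_hasSum (z : ℝ) : HasSum (fun n : ℕ => z ^ n / n.factorial) (Real.exp z) := by
  rw [Real.exp_eq_exp_ℝ]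
  exact NormedSpace.expSeries_div_hasSum_exp z

lemma Wseq_hasSum (M : ℕ) {s : ℝ} (hs : 0 ≤ s) :
    HasSum (fun a => Wseq M a * s ^ a / a.factorial) ((Real.exp s - 1) ^ M) := by
  induction M with
  | zero =>
      have h := hasSum_single (f := fun a : ℕ => Wseq 0 a * s ^ a / a.factorial) 0
        (fun b hb => by rw [Wseq_zero, zero_pow hb]; ring)
      simpa [Wseq_zero] using h
  | succ M ih =>
      set f : ℕ → ℝ := fun a => Wseq M a * s ^ a / a.factorial with hf
      set g : ℕ → ℝ := fun b => (if b = 0 then (0:ℝ) else 1) * s ^ b / b.factorial with hgdef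
      have hf0 : ∀ a, 0 ≤ f a := fun a => by
        have := Wseq_nonneg M a; positivity
      have hg0 : ∀ b, 0 ≤ g b := fun b => by
        rw [hgdef]; dsimp only; split <;> positivity
      have hg : HasSum g (Real.exp s - 1) := by
        have h2 : HasSum (fun b : ℕ => if b = 0 then (1:ℝ) else 0) 1 := by
          simpa using hasSum_ite_eq (0 : ℕ) (1 : ℝ)
        have h3 : (fun b : ℕ => s ^ b / b.factorial - if b = 0 then (1:ℝ) else 0) = g := by
          funext b
          rcases eq_or_ne b 0 with hb | hb <;> simp [g, hb]
        rw [← h3]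
        exact (exp_hasSum s).sub h2
      have hfn : Summable fun a => ‖f a‖ :=
        ih.summable.congr fun a => (Real.norm_of_nonneg (hf0 a)).symm
      have hgn : Summable fun b => ‖g b‖ :=
        hg.summable.congr fun b => (Real.norm_of_nonneg (hg0 b)).symm
      have key := hasSum_sum_range_mul_of_summable_norm hfn hgn
      rw [ih.tsum_eq, hg.tsum_eq, ← pow_succ] at key
      have hterm : (fun n => ∑ a ∈ Finset.range (n + 1), f a * g (n - a))
          = fun n => Wseq (M+1) n * s ^ n / n.factorial := by
        funext n
        rw [Finset.sum_range_succ]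
        have hlast : f n * g (n - n) = 0 := by simp [g]
        rw [hlast, add_zero]
        have hstep : ∀ a ∈ Finset.range n, f a * g (n - a)
            = (n.choose a : ℝ) * Wseq M a * s ^ n / n.factorial := by
          intro a ha
          have haln : a ≤ n := (Finset.mem_range.1 ha).le
          have hane : n - a ≠ 0 := Nat.sub_ne_zero_of_lt (Finset.mem_range.1 ha)
          rw [hf, hgdef]
          dsimp only
          rw [if_neg hane, one_mul]
          have := coeff_helper haln s s
          calc Wseq M a * s ^ a / a.factorial * (s ^ (n-a) / (n-a).factorial)
              = Wseq M a * ((s ^ a / a.factorial) * (s ^ (n-a) / (n-a).factorial)) := by ring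
            _ = Wseq M a * ((n.choose a : ℝ) * (s ^ a * s ^ (n-a)) / n.factorial) := by rw [this]
            _ = (n.choose a : ℝ) * Wseq M a * s ^ n / n.factorial := by
                rw [← pow_add, Nat.add_sub_cancel' haln]; ring
        rw [Finset.sum_congr rfl hstep, ← Finset.sum_div, ← Finset.sum_mul, ← Wseq_rec]
      rwa [hterm] at key

lemma B_hasSum (M : ℕ) {y s : ℝ} (hy : 0 ≤ y) (hs : 0 ≤ s) :
    HasSum (fun n => (∑ a ∈ Finset.range (n + 1),
        (n.choose a : ℝ) * Wseq M a * y ^ (n - a)) * s ^ n / n.factorial)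
      ((Real.exp s - 1) ^ M * Real.exp (y * s)) := by
  set f : ℕ → ℝ := fun a => Wseq M a * s ^ a / a.factorial with hf
  set g : ℕ → ℝ := fun b => (y * s) ^ b / b.factorial with hgdef
  have hWs := Wseq_hasSum M hs
  have hf0 : ∀ a, 0 ≤ f a := fun a => by
    have := Wseq_nonneg M a; positivity
  have hg0 : ∀ b, 0 ≤ g b := fun b => by
    have : 0 ≤ y * s := mul_nonneg hy hs
    rw [hgdef]; positivity
  have hg : HasSum g (Real.exp (y * s)) := exp_hasSum (y * s)
  have hfn : Summable fun a => ‖f a‖ :=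
    hWs.summable.congr fun a => (Real.norm_of_nonneg (hf0 a)).symm
  have hgn : Summable fun b => ‖g b‖ :=
    hg.summable.congr fun b => (Real.norm_of_nonneg (hg0 b)).symm
  have key := hasSum_sum_range_mul_of_summable_norm hfn hgn
  rw [hWs.tsum_eq, hg.tsum_eq] at key
  have hterm : (fun n => ∑ a ∈ Finset.range (n + 1), f a * g (n - a))
      = fun n => (∑ a ∈ Finset.range (n + 1),
          (n.choose a : ℝ) * Wseq M a * y ^ (n - a)) * s ^ n / n.factorial := by
    funext n
    rw [Finset.sum_mul, Finset.sum_div]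
    refine Finset.sum_congr rfl fun a ha => ?_
    have haln : a ≤ n := Nat.lt_succ_iff.1 (Finset.mem_range.1 ha)
    rw [hf, hgdef]
    dsimp only
    rw [mul_pow y s (n - a)]
    calc Wseq M a * s ^ a / a.factorial * (y ^ (n-a) * s ^ (n-a) / (n-a).factorial)
        = (Wseq M a * y ^ (n-a)) * ((s ^ a / a.factorial) * (s ^ (n-a) / (n-a).factorial)) := by
          ring
      _ = (Wseq M a * y ^ (n-a)) * ((n.choose a : ℝ) * (s ^ a * s ^ (n-a)) / n.factorial) := by
          rw [coeff_helper haln s s]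
      _ = (n.choose a : ℝ) * Wseq M a * y ^ (n-a) * s ^ n / n.factorial := by
          rw [← pow_add, Nat.add_sub_cancel' haln]; ring
  rwa [hterm] at key

lemma key_expand (M n : ℕ) (y : ℝ) :
    ∑ j ∈ Finset.range (M + 1), (-1:ℝ) ^ j * (y - j) ^ n * (M.choose j : ℝ)
      = ∑ a ∈ Finset.range (n + 1),
          (-1:ℝ) ^ (a + M) * (n.choose a : ℝ) * Wseq M a * y ^ (n - a) := by
  have hexp : ∀ j : ℕ, (y - (j:ℝ)) ^ n
      = ∑ a ∈ Finset.range (n + 1), (-(j:ℝ)) ^ a * y ^ (n - a) * (n.choose a : ℝ) := by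
    intro j
    rw [show y - (j:ℝ) = -(j:ℝ) + y by ring, add_pow]
  calc ∑ j ∈ Finset.range (M + 1), (-1:ℝ) ^ j * (y - j) ^ n * (M.choose j : ℝ)
      = ∑ j ∈ Finset.range (M + 1), ∑ a ∈ Finset.range (n + 1),
          ((n.choose a : ℝ) * y ^ (n - a) * (-1:ℝ)^a)
            * ((-1:ℝ)^j * (M.choose j : ℝ) * (j:ℝ)^a) := by
        refine Finset.sum_congr rfl fun j _ => ?_
        rw [hexp j, Finset.mul_sum, Finset.sum_mul]
        refine Finset.sum_congr rfl fun a _ => ?_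
        rw [neg_pow (j:ℝ) a]
        ring
    _ = ∑ a ∈ Finset.range (n + 1), ∑ j ∈ Finset.range (M + 1),
          ((n.choose a : ℝ) * y ^ (n - a) * (-1:ℝ)^a)
            * ((-1:ℝ)^j * (M.choose j : ℝ) * (j:ℝ)^a) := Finset.sum_comm
    _ = ∑ a ∈ Finset.range (n + 1),
          (-1:ℝ) ^ (a + M) * (n.choose a : ℝ) * Wseq M a * y ^ (n - a) := by
        refine Finset.sum_congr rfl fun a _ => ?_
        rw [← Finset.mul_sum, ← Sseq, Sseq_eq, pow_add]
        ring

lemma key_bound (M n : ℕ) (y : ℝ) :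
    |∑ j ∈ Finset.range (M + 1), (-1:ℝ) ^ j * (y - j) ^ n * (M.choose j : ℝ)|
      ≤ ∑ a ∈ Finset.range (n + 1), (n.choose a : ℝ) * Wseq M a * |y| ^ (n - a) := by
  rw [key_expand]
  refine (Finset.abs_sum_le_sum_abs _ _).trans (le_of_eq ?_)
  refine Finset.sum_congr rfl fun a _ => ?_
  rw [abs_mul, abs_mul, abs_mul, abs_pow, abs_pow, abs_neg, abs_one, one_pow, one_mul,
    Nat.abs_cast, abs_of_nonneg (Wseq_nonneg M a)]

lemma summable_pi_prod {g : ℕ → ℝ} (hg0 : ∀ n, 0 ≤ g n) (hg : Summable g) (r : ℕ) :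
    Summable (fun f : Fin r → ℕ => ∏ i, g (f i)) := by
  induction r with
  | zero =>
      have : HasSum (fun f : Fin 0 → ℕ => ∏ i, g (f i))
          ((fun f : Fin 0 → ℕ => ∏ i, g (f i)) default) :=
        hasSum_single default fun b hb => (hb (Subsingleton.elim b default)).elim
      exact this.summable
  | succ r ih =>
      have hprod : Summable (fun p : ℕ × (Fin r → ℕ) => g p.1 * ∏ i, g (p.2 i)) :=
        Summable.mul_of_nonneg (f := g) (g := fun f : Fin r → ℕ => ∏ i, g (f i))
          hg ih (fun n => hg0 n) (fun f => Finset.prod_nonneg fun i _ => hg0 _)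
      have hcomp := hprod.comp_injective (Fin.consEquiv fun _ : Fin (r+1) => ℕ).symm.injective
      refine hcomp.congr fun f => ?_
      simp only [Function.comp_apply, Fin.consEquiv_symm_apply]
      rw [Fin.prod_univ_succ]
      rfl

lemma row_hasSum (M : ℕ) (P y t : ℝ) :
    HasSum (fun n : ℕ =>
        (∑ j ∈ Finset.range (M + 1), (-1:ℝ) ^ j * (y - j) ^ n * (M.choose j : ℝ)) / P
          * t ^ n / n.factorial)
      ((1 - Real.exp (-t)) ^ M * Real.exp (y * t) / P) := by
  have hj : ∀ j ∈ Finset.range (M + 1),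
      HasSum (fun n : ℕ => ((-1:ℝ) ^ j * (M.choose j : ℝ) / P) * (((y - j) * t) ^ n / n.factorial))
        (((-1:ℝ) ^ j * (M.choose j : ℝ) / P) * Real.exp ((y - j) * t)) :=
    fun j _ => (exp_hasSum ((y - j) * t)).mul_left _
  have h1 := hasSum_sum hj
  have hfun : (fun n : ℕ => ∑ j ∈ Finset.range (M + 1),
        ((-1:ℝ) ^ j * (M.choose j : ℝ) / P) * (((y - j) * t) ^ n / n.factorial))
      = fun n : ℕ =>
        (∑ j ∈ Finset.range (M + 1), (-1:ℝ) ^ j * (y - j) ^ n * (M.choose j : ℝ)) / P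
          * t ^ n / n.factorial := by
    funext n
    rw [Finset.sum_div, Finset.sum_mul, Finset.sum_div]
    refine Finset.sum_congr rfl fun j _ => ?_
    rw [mul_pow]
    ring
  have hval : (∑ j ∈ Finset.range (M + 1),
        ((-1:ℝ) ^ j * (M.choose j : ℝ) / P) * Real.exp ((y - j) * t))
      = (1 - Real.exp (-t)) ^ M * Real.exp (y * t) / P := by
    have hexp : ∀ j : ℕ, Real.exp ((y - (j:ℝ)) * t) = Real.exp (y * t) * Real.exp (-t) ^ j := by
      intro j
      rw [← Real.exp_nat_mul, ← Real.exp_add]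
      congr 1
      ring
    rw [show (1 - Real.exp (-t)) = -Real.exp (-t) + 1 by ring, add_pow]
    rw [Finset.sum_mul, Finset.sum_div]
    refine Finset.sum_congr rfl fun j _ => ?_
    rw [hexp j, neg_pow]
    ring
  rw [hfun, hval] at h1
  exact h1

abbrev MPIdx (r : ℕ) := {f : Fin r → ℕ // StrictMono f ∧ ∀ i, 0 < f i}

/-- Generating function identity:
`Li_{(k_1,…,k_r)}(1-e^{-t}) e^{rxt} = ∑_n c_n t^n/n!` with
`c_n = ∑_{0<m_1<…<m_r} ∑_{j=0}^{m_r} (-1)^j (rx-j)^n C(m_r,j) / ∏ m_i^{k_i}`. -/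
theorem multiPolylog_genfun (r : ℕ) (hr : 0 < r) (k : Fin r → ℤ) (x : ℝ) :
    ∀ᶠ t in nhds (0 : ℝ),
      HasSum (fun n : ℕ =>
        (∑' m : {f : Fin r → ℕ // StrictMono f ∧ ∀ i, 0 < f i},
          ∑ j ∈ Finset.range (Finset.univ.sup m.1 + 1),
            (-1 : ℝ) ^ j * (r * x - j) ^ n * ((Finset.univ.sup m.1).choose j : ℝ) /
              ∏ i, ((m.1 i : ℝ) ^ (k i))) * t ^ n / n.factorial)
        (multiPolylog r k (1 - Real.exp (-t)) * Real.exp (r * x * t)) := by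
  set y : ℝ := (r : ℝ) * x with hy
  have hδpos : (0:ℝ) < 1 + (2:ℝ)⁻¹ ^ r := by positivity
  have hδ : 0 < Real.log (1 + (2:ℝ)⁻¹ ^ r) := Real.log_pos (by
    have : (0:ℝ) < (2:ℝ)⁻¹ ^ r := by positivity
    linarith)
  filter_upwards [Metric.ball_mem_nhds (0:ℝ) hδ] with t ht
  set s := |t| with hs_def
  have hs : 0 ≤ s := abs_nonneg t
  have hslt : s < Real.log (1 + (2:ℝ)⁻¹ ^ r) := by
    simpa [Real.dist_eq] using ht
  set q := Real.exp s - 1 with hqdef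
  have hq0 : 0 ≤ q := by nlinarith [Real.add_one_le_exp s]
  have hqle : q ≤ (2:ℝ)⁻¹ ^ r := by
    have h1 : Real.exp s < Real.exp (Real.log (1 + (2:ℝ)⁻¹ ^ r)) := Real.exp_lt_exp.2 hslt
    rw [Real.exp_log hδpos] at h1
    simp only [hqdef]
    linarith
  -- notation
  set K : ℕ := Finset.univ.sup (fun i : Fin r => (-k i).toNat) with hK
  have hPpos : ∀ m : MPIdx r, 0 < ∏ i, ((m.1 i : ℝ) ^ (k i)) :=
    fun m => Finset.prod_pos fun i _ => zpow_pos (by exact_mod_cast m.2.2 i) _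
  have hbase : ∀ (m : MPIdx r) (i : Fin r), (1:ℝ) ≤ (m.1 i : ℝ) :=
    fun m i => by exact_mod_cast m.2.2 i
  have hPinv : ∀ m : MPIdx r,
      (∏ i, ((m.1 i : ℝ) ^ (k i)))⁻¹ ≤ ∏ i, ((m.1 i : ℝ)) ^ K := by
    intro m
    have h1 : ∏ i, ((m.1 i : ℝ)) ^ (-(K:ℤ)) ≤ ∏ i, ((m.1 i : ℝ) ^ (k i)) := by
      refine Finset.prod_le_prod (fun i _ => zpow_nonneg (by positivity) _) (fun i _ => ?_)
      refine zpow_le_zpow_right₀ (hbase m i) ?_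
      have h2 : (-k i).toNat ≤ K := by rw [hK]; exact Finset.le_sup (f := fun i : Fin r => (-k i).toNat) (Finset.mem_univ i)
      have h3 : -k i ≤ ((-k i).toNat : ℤ) := Int.self_le_toNat _
      omega
    have h4 : ∏ i, ((m.1 i : ℝ)) ^ (-(K:ℤ)) = (∏ i, ((m.1 i : ℝ)) ^ K)⁻¹ := by
      rw [← Finset.prod_inv_distrib]
      refine Finset.prod_congr rfl fun i _ => ?_
      rw [zpow_neg, zpow_natCast]
    rw [h4] at h1
    have h5 : 0 < ∏ i, ((m.1 i : ℝ)) ^ K :=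
      Finset.prod_pos fun i _ => pow_pos (lt_of_lt_of_le one_pos (hbase m i)) _
    have h6 := inv_anti₀ (inv_pos.2 h5) h1
    rwa [inv_inv] at h6
  have hqM : ∀ m : MPIdx r,
      q ^ (Finset.univ.sup m.1) ≤ ∏ i, ((2:ℝ)⁻¹) ^ (m.1 i) := by
    intro m
    have h1 : q ^ (Finset.univ.sup m.1) ≤ ((2:ℝ)⁻¹ ^ r) ^ (Finset.univ.sup m.1) :=
      pow_le_pow_left₀ hq0 hqle _
    have h3 : ∑ i, m.1 i ≤ r * (Finset.univ.sup m.1) := by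
      calc ∑ i : Fin r, m.1 i ≤ ∑ _i : Fin r, (Finset.univ.sup m.1) :=
            Finset.sum_le_sum fun i _ => Finset.le_sup (Finset.mem_univ i)
        _ = r * (Finset.univ.sup m.1) := by
            rw [Finset.sum_const, Finset.card_univ, Fintype.card_fin, smul_eq_mul]
    have h4 : ((2:ℝ)⁻¹) ^ (r * (Finset.univ.sup m.1)) ≤ ((2:ℝ)⁻¹) ^ (∑ i, m.1 i) :=
      pow_le_pow_of_le_one (by norm_num) (by norm_num) h3
    have h5 : ((2:ℝ)⁻¹) ^ (∑ i, m.1 i) = ∏ i, ((2:ℝ)⁻¹) ^ (m.1 i) :=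
      (Finset.prod_pow_eq_pow_sum _ _ _).symm
    calc q ^ (Finset.univ.sup m.1) ≤ ((2:ℝ)⁻¹ ^ r) ^ (Finset.univ.sup m.1) := h1
      _ = ((2:ℝ)⁻¹) ^ (r * (Finset.univ.sup m.1)) := by rw [← pow_mul]
      _ ≤ ((2:ℝ)⁻¹) ^ (∑ i, m.1 i) := h4
      _ = ∏ i, ((2:ℝ)⁻¹) ^ (m.1 i) := h5
  -- summability of the dominating fiber sums
  have hgsum : Summable (fun n : ℕ => (n:ℝ) ^ K * (2:ℝ)⁻¹ ^ n) :=
    summable_pow_mul_geometric_of_norm_lt_one K (by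
      rw [Real.norm_eq_abs, abs_of_pos] <;> norm_num)
  have hg0 : ∀ n : ℕ, 0 ≤ (n:ℝ) ^ K * (2:ℝ)⁻¹ ^ n := fun n => by positivity
  have hGι : Summable (fun m : MPIdx r => ∏ i, ((m.1 i : ℝ) ^ K * (2:ℝ)⁻¹ ^ (m.1 i))) :=
    ((summable_pi_prod hg0 hgsum r).comp_injective Subtype.val_injective).congr
      fun m => rfl
  have hF : Summable (fun m : MPIdx r =>
      q ^ (Finset.univ.sup m.1) * Real.exp (|y| * s) / ∏ i, ((m.1 i : ℝ) ^ (k i))) := by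
    refine Summable.of_nonneg_of_le (fun m => ?_) (fun m => ?_) (hGι.mul_left (Real.exp (|y| * s)))
    · exact div_nonneg (mul_nonneg (pow_nonneg hq0 _) (Real.exp_nonneg _)) (hPpos m).le
    · calc q ^ (Finset.univ.sup m.1) * Real.exp (|y| * s) / ∏ i, ((m.1 i : ℝ) ^ (k i))
          = Real.exp (|y| * s) *
              (q ^ (Finset.univ.sup m.1) * (∏ i, ((m.1 i : ℝ) ^ (k i)))⁻¹) := by
            rw [div_eq_mul_inv]; ring
        _ ≤ Real.exp (|y| * s) *
              ((∏ i, ((2:ℝ)⁻¹) ^ (m.1 i)) * ∏ i, ((m.1 i : ℝ)) ^ K) := by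
            refine mul_le_mul_of_nonneg_left ?_ (Real.exp_nonneg _)
            refine mul_le_mul (hqM m) (hPinv m) (inv_nonneg.2 (hPpos m).le) ?_
            exact Finset.prod_nonneg fun i _ => pow_nonneg (by positivity) _
        _ = Real.exp (|y| * s) * ∏ i, ((m.1 i : ℝ) ^ K * (2:ℝ)⁻¹ ^ (m.1 i)) := by
            rw [← Finset.prod_mul_distrib]
            congr 1
            exact Finset.prod_congr rfl fun i _ => by ring
  -- the dominating double family
  have hDrow : ∀ m : MPIdx r, HasSum (fun n : ℕ =>
      (∑ a ∈ Finset.range (n + 1),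
        (n.choose a : ℝ) * Wseq (Finset.univ.sup m.1) a * |y| ^ (n - a)) * s ^ n / n.factorial
        / ∏ i, ((m.1 i : ℝ) ^ (k i)))
      (q ^ (Finset.univ.sup m.1) * Real.exp (|y| * s) / ∏ i, ((m.1 i : ℝ) ^ (k i))) := by
    intro m
    exact (B_hasSum (Finset.univ.sup m.1) (abs_nonneg y) hs).div_const _
  have hD0 : ∀ p : MPIdx r × ℕ, 0 ≤
      (∑ a ∈ Finset.range (p.2 + 1),
        ((p.2).choose a : ℝ) * Wseq (Finset.univ.sup p.1.1) a * |y| ^ (p.2 - a)) * s ^ p.2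
          / (p.2).factorial / ∏ i, ((p.1.1 i : ℝ) ^ (k i)) := by
    intro p
    have hsum0 : 0 ≤ ∑ a ∈ Finset.range (p.2 + 1),
        ((p.2).choose a : ℝ) * Wseq (Finset.univ.sup p.1.1) a * |y| ^ (p.2 - a) :=
      Finset.sum_nonneg fun a _ => mul_nonneg
        (mul_nonneg (by positivity) (Wseq_nonneg _ _)) (by positivity)
    have := (hPpos p.1).le
    positivity
  have hDsum : Summable (fun p : MPIdx r × ℕ =>
      (∑ a ∈ Finset.range (p.2 + 1),
        ((p.2).choose a : ℝ) * Wseq (Finset.univ.sup p.1.1) a * |y| ^ (p.2 - a)) * s ^ p.2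
          / (p.2).factorial / ∏ i, ((p.1.1 i : ℝ) ^ (k i))) := by
    refine (summable_prod_of_nonneg (fun p => hD0 p)).2 ⟨fun m => (hDrow m).summable, ?_⟩
    exact hF.congr fun m => ((hDrow m).tsum_eq).symm
  -- the actual double family
  have hAD : ∀ p : MPIdx r × ℕ,
      |(∑ j ∈ Finset.range (Finset.univ.sup p.1.1 + 1),
          (-1:ℝ) ^ j * (y - j) ^ p.2 * ((Finset.univ.sup p.1.1).choose j : ℝ))
          / (∏ i, ((p.1.1 i : ℝ) ^ (k i))) * t ^ p.2 / (p.2).factorial|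
      ≤ (∑ a ∈ Finset.range (p.2 + 1),
          ((p.2).choose a : ℝ) * Wseq (Finset.univ.sup p.1.1) a * |y| ^ (p.2 - a)) * s ^ p.2
          / (p.2).factorial / ∏ i, ((p.1.1 i : ℝ) ^ (k i)) := by
    intro p
    obtain ⟨m, n⟩ := p
    have hPp := hPpos m
    have habs : |(∑ j ∈ Finset.range (Finset.univ.sup m.1 + 1),
          (-1:ℝ) ^ j * (y - j) ^ n * ((Finset.univ.sup m.1).choose j : ℝ))
          / (∏ i, ((m.1 i : ℝ) ^ (k i))) * t ^ n / (n.factorial:ℝ)|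
        = |∑ j ∈ Finset.range (Finset.univ.sup m.1 + 1),
          (-1:ℝ) ^ j * (y - j) ^ n * ((Finset.univ.sup m.1).choose j : ℝ)|
          * s ^ n / (n.factorial:ℝ) / ∏ i, ((m.1 i : ℝ) ^ (k i)) := by
      rw [abs_div, abs_mul, abs_div, abs_pow, abs_of_pos hPp, Nat.abs_cast, ← hs_def]
      ring
    rw [habs]
    have hkb := key_bound (Finset.univ.sup m.1) n y
    gcongr
  have hA : Summable (fun p : MPIdx r × ℕ =>
      (∑ j ∈ Finset.range (Finset.univ.sup p.1.1 + 1),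
        (-1:ℝ) ^ j * (y - j) ^ p.2 * ((Finset.univ.sup p.1.1).choose j : ℝ))
        / (∏ i, ((p.1.1 i : ℝ) ^ (k i))) * t ^ p.2 / (p.2).factorial) := by
    refine Summable.of_norm_bounded hDsum (fun p => ?_)
    rw [Real.norm_eq_abs]
    exact hAD p
  -- rows
  have hrow : ∀ m : MPIdx r, HasSum (fun n : ℕ =>
      (∑ j ∈ Finset.range (Finset.univ.sup m.1 + 1),
        (-1:ℝ) ^ j * (y - j) ^ n * ((Finset.univ.sup m.1).choose j : ℝ))
        / (∏ i, ((m.1 i : ℝ) ^ (k i))) * t ^ n / n.factorial)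
      ((1 - Real.exp (-t)) ^ (Finset.univ.sup m.1) * Real.exp (y * t)
        / ∏ i, ((m.1 i : ℝ) ^ (k i))) :=
    fun m => row_hasSum _ _ y t
  have hRight : HasSum (fun m : MPIdx r =>
      (1 - Real.exp (-t)) ^ (Finset.univ.sup m.1) * Real.exp (y * t)
        / ∏ i, ((m.1 i : ℝ) ^ (k i)))
      (∑' p : MPIdx r × ℕ,
        (∑ j ∈ Finset.range (Finset.univ.sup p.1.1 + 1),
          (-1:ℝ) ^ j * (y - j) ^ p.2 * ((Finset.univ.sup p.1.1).choose j : ℝ))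
          / (∏ i, ((p.1.1 i : ℝ) ^ (k i))) * t ^ p.2 / (p.2).factorial) :=
    hA.hasSum.prod_fiberwise hrow
  -- columns
  have hswap : Summable (fun p : ℕ × MPIdx r =>
      (∑ j ∈ Finset.range (Finset.univ.sup p.2.1 + 1),
        (-1:ℝ) ^ j * (y - j) ^ p.1 * ((Finset.univ.sup p.2.1).choose j : ℝ))
        / (∏ i, ((p.2.1 i : ℝ) ^ (k i))) * t ^ p.1 / (p.1).factorial) :=
    (hA.comp_injective Prod.swap_injective).congr fun p => rfl
  have htswap : (∑' p : ℕ × MPIdx r,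
      (∑ j ∈ Finset.range (Finset.univ.sup p.2.1 + 1),
        (-1:ℝ) ^ j * (y - j) ^ p.1 * ((Finset.univ.sup p.2.1).choose j : ℝ))
        / (∏ i, ((p.2.1 i : ℝ) ^ (k i))) * t ^ p.1 / (p.1).factorial)
      = ∑' p : MPIdx r × ℕ,
      (∑ j ∈ Finset.range (Finset.univ.sup p.1.1 + 1),
        (-1:ℝ) ^ j * (y - j) ^ p.2 * ((Finset.univ.sup p.1.1).choose j : ℝ))
        / (∏ i, ((p.1.1 i : ℝ) ^ (k i))) * t ^ p.2 / (p.2).factorial := by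
    simpa using (Equiv.prodComm ℕ (MPIdx r)).tsum_eq (fun p : MPIdx r × ℕ =>
      (∑ j ∈ Finset.range (Finset.univ.sup p.1.1 + 1),
        (-1:ℝ) ^ j * (y - j) ^ p.2 * ((Finset.univ.sup p.1.1).choose j : ℝ))
        / (∏ i, ((p.1.1 i : ℝ) ^ (k i))) * t ^ p.2 / (p.2).factorial)
  have hcols : ∀ n : ℕ, HasSum (fun m : MPIdx r =>
      (∑ j ∈ Finset.range (Finset.univ.sup m.1 + 1),
        (-1:ℝ) ^ j * (y - j) ^ n * ((Finset.univ.sup m.1).choose j : ℝ))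
        / (∏ i, ((m.1 i : ℝ) ^ (k i))) * t ^ n / n.factorial)
      ((∑' m : MPIdx r,
        (∑ j ∈ Finset.range (Finset.univ.sup m.1 + 1),
          (-1:ℝ) ^ j * (y - j) ^ n * ((Finset.univ.sup m.1).choose j : ℝ))
          / (∏ i, ((m.1 i : ℝ) ^ (k i)))) * t ^ n / n.factorial) := by
    intro n
    have hslice : Summable (fun m : MPIdx r =>
        (∑ j ∈ Finset.range (Finset.univ.sup m.1 + 1),
          (-1:ℝ) ^ j * (y - j) ^ n * ((Finset.univ.sup m.1).choose j : ℝ))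
          / (∏ i, ((m.1 i : ℝ) ^ (k i))) * t ^ n / n.factorial) :=
      (hA.comp_injective (i := fun m : MPIdx r => (m, n))
        (fun m₁ m₂ h => congrArg Prod.fst h)).congr fun m => rfl
    by_cases hτ : (t ^ n / (n.factorial:ℝ)) = 0
    · simp only [mul_div_assoc, hτ, mul_zero]
      first
      | exact hasSum_zero
      | skip
    · have hc : Summable (fun m : MPIdx r =>
          (∑ j ∈ Finset.range (Finset.univ.sup m.1 + 1),
            (-1:ℝ) ^ j * (y - j) ^ n * ((Finset.univ.sup m.1).choose j : ℝ))
            / (∏ i, ((m.1 i : ℝ) ^ (k i)))) := by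
        refine (hslice.mul_right ((t ^ n / (n.factorial:ℝ))⁻¹)).congr fun m => ?_
        rw [mul_div_assoc, mul_assoc, mul_inv_cancel₀ hτ, mul_one]
      have h2 := hc.hasSum.mul_right (t ^ n / (n.factorial:ℝ))
      simpa only [mul_div_assoc] using h2
  have hswapSum := hswap.hasSum
  rw [htswap] at hswapSum
  have hLeft := hswapSum.prod_fiberwise hcols
  have hval : multiPolylog r k (1 - Real.exp (-t)) * Real.exp (y * t)
      = ∑' p : MPIdx r × ℕ,
        (∑ j ∈ Finset.range (Finset.univ.sup p.1.1 + 1),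
          (-1:ℝ) ^ j * (y - j) ^ p.2 * ((Finset.univ.sup p.1.1).choose j : ℝ))
          / (∏ i, ((p.1.1 i : ℝ) ^ (k i))) * t ^ p.2 / (p.2).factorial := by
    rw [multiPolylog, ← tsum_mul_right, ← hRight.tsum_eq]
    exact tsum_congr fun m => div_mul_eq_mul_div _ _ _
  rw [hval]
  simp only [← Finset.sum_div]
  exact hLeft
end
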